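/- Let E₁, E₂, H₁, H₂ be events with E₁H₁ = ∅, H₁ ≠ ∅, H₂ ≠ ∅, and ¬H₁∧E₂∧H₂ ≠ ∅. Consider the assessment P(E₁|H₁) = 1/2, P(E₂|H₂) = 1. Then the global gain condition min G_{H₁∨H₂} ≤ 0 ≤ max G_{H₁∨H₂} holds for all stakes s₁, s₂ (because G vanishes on the constituent ¬H₁E₂H₂), yet the sub-assessment P(E₁|H₁) = 1/2 is incoherent since G_{H₁} = −s₁/2 < 0 for every s₁ > 0. Hence the no-Dutch-Book condition on the full family is necessary but not sufficient for coherence of conditional probability assessments. -/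
import Mathlib


/-- Indicator (in `ℝ`) of an event. -/
noncomputable def ind {Ω : Type*} (A : Set Ω) : Ω → ℝ := A.indicator 1

/-- The random gain `G = s₁H₁(E₁ − 1/2) + s₂H₂(E₂ − 1)` for the assessment
`P(E₁|H₁) = 1/2`, `P(E₂|H₂) = 1`. -/
noncomputable def gainC {Ω : Type*} (E₁ E₂ H₁ H₂ : Set Ω) (s₁ s₂ : ℝ) (ω : Ω) : ℝ :=
  s₁ * ind H₁ ω * (ind E₁ ω - 1/2) + s₂ * ind H₂ ω * (ind E₂ ω - 1)

/-- With `E₁H₁ = ∅`, `H₁ ≠ ∅`, `H₂ ≠ ∅`, `¬H₁E₂H₂ ≠ ∅` and the assessment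
`P(E₁|H₁) = 1/2`, `P(E₂|H₂) = 1`: the global no-Dutch-Book condition
`min G_{H₁∨H₂} ≤ 0 ≤ max G_{H₁∨H₂}` holds for all stakes (the gain vanishes
on `¬H₁E₂H₂`), yet the sub-assessment `P(E₁|H₁) = 1/2` is incoherent, since
its own gain restricted to `H₁` is `−s₁/2 < 0` for every `s₁ > 0`.  Hence the
no-Dutch-Book condition on the full family is necessary but not sufficient. -/
theorem necessary_not_sufficient {Ω : Type*} (E₁ E₂ H₁ H₂ : Set Ω)
    (h₁ : E₁ ∩ H₁ = ∅) (h₂ : H₁.Nonempty) (h₃ : H₂.Nonempty)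
    (h₄ : (H₁ᶜ ∩ E₂ ∩ H₂).Nonempty) :
    (∀ s₁ s₂ : ℝ,
        (∃ ω ∈ H₁ ∪ H₂, gainC E₁ E₂ H₁ H₂ s₁ s₂ ω ≤ 0) ∧
        (∃ ω ∈ H₁ ∪ H₂, 0 ≤ gainC E₁ E₂ H₁ H₂ s₁ s₂ ω)) ∧
    (∀ s₁ : ℝ, 0 < s₁ → ∀ ω ∈ H₁, s₁ * ind H₁ ω * (ind E₁ ω - 1/2) < 0) := by
  obtain ⟨ω₀, hω₀⟩ := h₄
  obtain ⟨⟨hnH₁, hE₂⟩, hH₂⟩ := hω₀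
  have hg : ∀ s₁ s₂ : ℝ, gainC E₁ E₂ H₁ H₂ s₁ s₂ ω₀ = 0 := by
    intro s₁ s₂
    simp [gainC, ind, Set.indicator_of_notMem hnH₁, Set.indicator_of_mem hH₂,
      Set.indicator_of_mem hE₂]
  refine ⟨fun s₁ s₂ => ⟨⟨ω₀, Or.inr hH₂, (hg s₁ s₂).le⟩, ⟨ω₀, Or.inr hH₂, (hg s₁ s₂).ge⟩⟩,
    fun s₁ hs₁ ω hω => ?_⟩
  have hnE₁ : ω ∉ E₁ := fun hE => Set.eq_empty_iff_forall_notMem.mp h₁ ω ⟨hE, hω⟩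
  simp [ind, Set.indicator_of_mem hω, Set.indicator_of_notMem hnE₁]
  linarith
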